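/- The two parametrizations of Bertrand's problem give different answers: with the rectangle parametrization the probability that a random chord is shorter than √3 is 2/3, while with the midpoint parametrization it is 3/4, and 2/3 ≠ 3/4. -/

import Mathlib

open Real MeasureTheory

set_option linter.unnecessarySeqFocus false

lemma set1 : {p : ℝ × ℝ | p ∈ Set.Ioc (0 : ℝ) (2 * π) ×ˢ Set.Ioc (0 : ℝ) (π / 2) ∧
        2 * Real.cos p.2 < Real.sqrt 3} = Set.Ioc (0 : ℝ) (2 * π) ×ˢ Set.Ioc (π/6) (π / 2) := by
  ext ⟨x, y⟩
  simp only [Set.mem_setOf_eq, Set.mem_prod, Set.mem_Ioc]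
  constructor
  · rintro ⟨⟨hx, hy1, hy2⟩, hc⟩
    refine ⟨hx, ?_, hy2⟩
    have h6 : (π/6 : ℝ) ∈ Set.Icc (0:ℝ) π := ⟨by positivity, by linarith [pi_pos]⟩
    have hy : y ∈ Set.Icc (0:ℝ) π := ⟨hy1.le, by linarith [pi_pos]⟩
    have := (Real.strictAntiOn_cos.lt_iff_gt hy h6).mp ?_
    · exact this
    · rw [Real.cos_pi_div_six]; linarith
  · rintro ⟨hx, hy1, hy2⟩
    refine ⟨⟨hx, by linarith [pi_pos], hy2⟩, ?_⟩
    have h6 : (π/6 : ℝ) ∈ Set.Icc (0:ℝ) π := ⟨by positivity, by linarith [pi_pos]⟩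
    have hy : y ∈ Set.Icc (0:ℝ) π := ⟨by linarith [pi_pos], by linarith [pi_pos]⟩
    have := (Real.strictAntiOn_cos.lt_iff_gt hy h6).mpr hy1
    rw [Real.cos_pi_div_six] at this; linarith

lemma part1 : (volume {p : ℝ × ℝ | p ∈ Set.Ioc (0 : ℝ) (2 * π) ×ˢ Set.Ioc (0 : ℝ) (π / 2) ∧
        2 * Real.cos p.2 < Real.sqrt 3}) / ENNReal.ofReal (π^2) = 2 / 3 := by
  rw [set1, Measure.volume_eq_prod, Measure.prod_prod, Real.volume_Ioc, Real.volume_Ioc,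
    ← ENNReal.ofReal_mul (by linarith [pi_pos]), ← ENNReal.ofReal_div_of_pos (by positivity)]
  have : (2 * π - 0) * (π / 2 - π / 6) / π ^ 2 = 2/3 := by
    field_simp; ring
  rw [this]
  rw [ENNReal.ofReal_div_of_pos (by norm_num)]
  norm_num

lemma set2 : {p : ℝ × ℝ | p.1^2 + p.2^2 < 1 ∧
        2 * Real.sqrt (1 - p.1^2 - p.2^2) < Real.sqrt 3} =
    (Complex.measurableEquivRealProd '' (Metric.ball 0 1 \ Metric.closedBall 0 (1/2))) := by
  rw [MeasurableEquiv.image_eq_preimage_symm]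
  ext ⟨x, y⟩
  simp only [Set.mem_setOf_eq, Set.mem_preimage, Set.mem_diff, Metric.mem_ball,
    Metric.mem_closedBall, Complex.dist_eq, sub_zero]
  have habs : ‖Complex.measurableEquivRealProd.symm (x, y)‖ = Real.sqrt (x^2 + y^2) := by
    rw [Complex.norm_def, Complex.normSq_apply]
    congr 1 <;> simp [Complex.measurableEquivRealProd, Complex.equivRealProd] <;> ring
  rw [habs]
  constructor
  · rintro ⟨h1, h2⟩
    have hnn : (0:ℝ) ≤ x^2 + y^2 := by positivity
    constructor
    · rw [show (1:ℝ) = Real.sqrt 1 by simp]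
      exact Real.sqrt_lt_sqrt hnn h1
    · intro hle
      have : x^2 + y^2 ≤ 1/4 := by
        have := Real.sqrt_le_sqrt (le_of_eq (show ((1:ℝ)/2)^2 = 1/4 by norm_num).symm)
        nlinarith [Real.sq_sqrt hnn, Real.sqrt_nonneg (x^2+y^2), hle]
      have h4 : Real.sqrt 3 ≤ 2 * Real.sqrt (1 - x^2 - y^2) := by
        rw [show 2 * Real.sqrt (1 - x^2 - y^2) = Real.sqrt (4 * (1 - x^2 - y^2)) by
          rw [Real.sqrt_mul (by norm_num), show Real.sqrt 4 = 2 by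
            rw [show (4:ℝ) = 2^2 by norm_num, Real.sqrt_sq (by norm_num)]]]
        apply Real.sqrt_le_sqrt; linarith
      linarith
  · rintro ⟨h1, h2⟩
    push_neg at h2
    have hnn : (0:ℝ) ≤ x^2 + y^2 := by positivity
    have ha : x^2 + y^2 < 1 := by
      nlinarith [Real.sq_sqrt hnn, Real.sqrt_nonneg (x^2+y^2)]
    have hb : 1/4 < x^2 + y^2 := by
      nlinarith [Real.sq_sqrt hnn, Real.sqrt_nonneg (x^2+y^2)]
    refine ⟨ha, ?_⟩
    rw [show 2 * Real.sqrt (1 - x^2 - y^2) = Real.sqrt (4 * (1 - x^2 - y^2)) by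
      rw [Real.sqrt_mul (by norm_num), show Real.sqrt 4 = 2 by
        rw [show (4:ℝ) = 2^2 by norm_num, Real.sqrt_sq (by norm_num)]]]
    apply Real.sqrt_lt_sqrt (by linarith); linarith

lemma part2 : (volume {p : ℝ × ℝ | p.1^2 + p.2^2 < 1 ∧
        2 * Real.sqrt (1 - p.1^2 - p.2^2) < Real.sqrt 3}) / ENNReal.ofReal π = 3 / 4 := by
  rw [set2, MeasurableEquiv.image_eq_preimage_symm]
  rw [Complex.volume_preserving_equiv_real_prod.symm _ |>.measure_preimage
    ((measurableSet_ball.diff measurableSet_closedBall).nullMeasurableSet)]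
  have hfin : volume (Metric.closedBall (0:ℂ) (1/2)) ≠ ⊤ := by
    rw [Complex.volume_closedBall]; exact ENNReal.mul_ne_top (by simp) (by simp)
  rw [measure_diff (Metric.closedBall_subset_ball (by norm_num))
    measurableSet_closedBall.nullMeasurableSet hfin,
    Complex.volume_ball, Complex.volume_closedBall]
  have hpi : (NNReal.pi : ENNReal) = ENNReal.ofReal π := by
    rw [← ENNReal.ofReal_coe_nnreal, NNReal.coe_real_pi]
  rw [hpi, ← ENNReal.ofReal_pow (by norm_num), ← ENNReal.ofReal_pow (by norm_num),
    ← ENNReal.ofReal_mul (by positivity), ← ENNReal.ofReal_mul (by positivity),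
    ← ENNReal.ofReal_sub _ (by positivity),
    ← ENNReal.ofReal_div_of_pos Real.pi_pos]
  have : ((1:ℝ)^2 * π - (1/2)^2 * π) / π = 3/4 := by
    field_simp; ring
  rw [this, ENNReal.ofReal_div_of_pos (by norm_num)]
  norm_num

theorem bertrand_paradox :
    ((volume {p : ℝ × ℝ | p ∈ Set.Ioc (0 : ℝ) (2 * π) ×ˢ Set.Ioc (0 : ℝ) (π / 2) ∧
        2 * Real.cos p.2 < Real.sqrt 3}) / ENNReal.ofReal (π^2) = 2 / 3)
    ∧ ((volume {p : ℝ × ℝ | p.1^2 + p.2^2 < 1 ∧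
        2 * Real.sqrt (1 - p.1^2 - p.2^2) < Real.sqrt 3}) / ENNReal.ofReal π = 3 / 4)
    ∧ (2 / 3 : ENNReal) ≠ 3 / 4 := by
  refine ⟨part1, part2, ?_⟩
  intro h
  have h2 : ((2:ENNReal)/3).toReal = ((3:ENNReal)/4).toReal := by rw [h]
  rw [ENNReal.toReal_div, ENNReal.toReal_div] at h2
  norm_num at h2
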